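/- Lucas-derivative of the binomial exponential: for α, β, u, v ∈ ℂ define E_{α,β}(x) = Σ_{n=0}^{∞} (α ⊕_{u,v} β)^{(n)}·xⁿ/{n}_{s,t}!. Assume the series defining E_{α,β}(w), E_{αu,βφ}(w) and E_{αφ',βv}(w) converge absolutely for all w ∈ ℂ. Then for every x ≠ 0, (D_{s,t}E_{α,β})(x) = α·E_{αu,βφ}(x) + β·E_{αφ',βv}(x). In particular, when u = φ and v = φ', the function f = E_{α,β} satisfies the proportional functional equation (D_{s,t}f)(x) = α·f(φx) + β·f(φ'x) for all x ≠ 0. -/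

import Mathlib

open scoped BigOperators

noncomputable section

/-- The Lucas sequence `{n}_{s,t}`. -/
def lucasSeq (s t : ℂ) : ℕ → ℂ
  | 0 => 0
  | 1 => 1
  | n + 2 => s * lucasSeq s t (n + 1) + t * lucasSeq s t n

/-- The Lucastorial `{n}_{s,t}!`. -/
def lucasFact (s t : ℂ) : ℕ → ℂ
  | 0 => 1
  | n + 1 => lucasFact s t n * lucasSeq s t (n + 1)

/-- The Lucasnomial coefficient `{n choose k}_{s,t}`. -/
def lucasBinom (s t : ℂ) (n k : ℕ) : ℂ :=
  lucasFact s t n / (lucasFact s t k * lucasFact s t (n - k))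

/-- The `(u,v)`-deformed Lucasnomial power `(x ⊕_{u,v} y)^{(n)}`. -/
def lucasPow (s t u v x y : ℂ) (n : ℕ) : ℂ :=
  ∑ k ∈ Finset.range (n + 1),
    lucasBinom s t n k * u ^ ((n - k).choose 2) * v ^ (k.choose 2) * x ^ (n - k) * y ^ k

/-- The Lucas-derivative with respect to the roots `p = φ`, `q = φ'`. -/
def lucasDeriv (p q : ℂ) (f : ℂ → ℂ) (x : ℂ) : ℂ :=
  (f (p * x) - f (q * x)) / ((p - q) * x)

/-- The Lucas-derivative, extended by `0` at `0`, as an operator suitable for iteration. -/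
def lucasDeriv0 (p q : ℂ) (f : ℂ → ℂ) : ℂ → ℂ :=
  fun x => if x = 0 then 0 else (f (p * x) - f (q * x)) / ((p - q) * x)

/-- The Lucas-Pantograph exponential `exp_{s,t}(z,u)`. -/
def lucasExp (s t u z : ℂ) : ℂ :=
  ∑' n : ℕ, u ^ (n.choose 2) * z ^ n / lucasFact s t n

/-- The Lucas-Pantograph sine `sin_{s,t}(z,u)`. -/
def lucasSin (s t u z : ℂ) : ℂ :=
  ∑' n : ℕ, (-1 : ℂ) ^ n * u ^ ((2 * n + 1).choose 2) * z ^ (2 * n + 1) / lucasFact s t (2 * n + 1)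

/-- The Lucas-Pantograph cosine `cos_{s,t}(z,u)`. -/
def lucasCos (s t u z : ℂ) : ℂ :=
  ∑' n : ℕ, (-1 : ℂ) ^ n * u ^ ((2 * n).choose 2) * z ^ (2 * n) / lucasFact s t (2 * n)

/-- The binomial exponential `E_{α,β}(x) = Σ (α ⊕_{u,v} β)^{(n)} xⁿ/{n}!`. -/
def binLucasExp (s t u v α β x : ℂ) : ℂ :=
  ∑' n : ℕ, lucasPow s t u v α β n * x ^ n / lucasFact s t n

lemma lucasFact_ne_zero (s t : ℂ) (hL : ∀ n : ℕ, 1 ≤ n → lucasSeq s t n ≠ 0) (n : ℕ) :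
    lucasFact s t n ≠ 0 := by
  induction n with
  | zero => simp [lucasFact]
  | succ n ih => exact mul_ne_zero ih (hL (n + 1) (Nat.le_add_left 1 n))

lemma binet (s t d : ℂ) (hd : d ^ 2 = s ^ 2 + 4 * t) (n : ℕ) :
    d * lucasSeq s t n = ((s + d) / 2) ^ n - ((s - d) / 2) ^ n := by
  induction n using Nat.twoStepInduction with
  | zero => simp [lucasSeq]
  | one => simp [lucasSeq]; ring
  | more n ih1 ih2 =>
    show d * lucasSeq s t (n + 2) = _
    rw [show lucasSeq s t (n + 2) = s * lucasSeq s t (n + 1) + t * lucasSeq s t n from rfl]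
    linear_combination s * ih2 + t * ih1 + ((((s - d) / 2) ^ n - ((s + d) / 2) ^ n) / 4) * hd

lemma lucas_add (s t d : ℂ) (hd : d ^ 2 = s ^ 2 + 4 * t) (hdne : d ≠ 0) (k m : ℕ) :
    lucasSeq s t (k + m + 2) =
      ((s + d) / 2) ^ (k + 1) * lucasSeq s t (m + 1)
        + ((s - d) / 2) ^ (m + 1) * lucasSeq s t (k + 1) := by
  apply mul_left_cancel₀ hdne
  have b1 := binet s t d hd (k + m + 2)
  have b2 := binet s t d hd (m + 1)
  have b3 := binet s t d hd (k + 1)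
  linear_combination b1 - ((s + d) / 2) ^ (k + 1) * b2 - ((s - d) / 2) ^ (m + 1) * b3

lemma pascal (s t d : ℂ) (hd : d ^ 2 = s ^ 2 + 4 * t) (hdne : d ≠ 0)
    (hL : ∀ n : ℕ, 1 ≤ n → lucasSeq s t n ≠ 0) (k m : ℕ) :
    lucasBinom s t (k + m + 2) (k + 1) =
      ((s + d) / 2) ^ (k + 1) * lucasBinom s t (k + m + 1) (k + 1)
        + ((s - d) / 2) ^ (m + 1) * lucasBinom s t (k + m + 1) k := by
  have hF := lucasFact_ne_zero s t hL
  unfold lucasBinom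
  have e1 : k + m + 2 - (k + 1) = m + 1 := by omega
  have e2 : k + m + 1 - (k + 1) = m := by omega
  have e3 : k + m + 1 - k = m + 1 := by omega
  rw [e1, e2, e3]
  rw [show lucasFact s t (k + m + 2) = lucasFact s t (k + m + 1) * lucasSeq s t (k + m + 2) from rfl,
      show lucasFact s t (m + 1) = lucasFact s t m * lucasSeq s t (m + 1) from rfl,
      show lucasFact s t (k + 1) = lucasFact s t k * lucasSeq s t (k + 1) from rfl,
      lucas_add s t d hd hdne k m]
  have hLm := hL (m + 1) (by omega)
  have hLk := hL (k + 1) (by omega)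
  have gen : ∀ A X Y L1 L2 Fk Fm : ℂ, L1 ≠ 0 → L2 ≠ 0 → Fk ≠ 0 → Fm ≠ 0 →
      A * (X * L1 + Y * L2) / (Fk * L2 * (Fm * L1)) =
        X * (A / (Fk * L2 * Fm)) + Y * (A / (Fk * (Fm * L1))) := by
    intros A X Y L1 L2 Fk Fm h1 h2 h3 h4
    field_simp
  exact gen _ _ _ _ _ _ _ hLm hLk (hF k) (hF m)

lemma choose_two_succ (j : ℕ) : (j + 1).choose 2 = j.choose 2 + j := by
  rw [Nat.choose_succ_succ, Nat.choose_one_right, Nat.add_comm]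

lemma key (s t d : ℂ) (hd : d ^ 2 = s ^ 2 + 4 * t) (hdne : d ≠ 0)
    (hL : ∀ n : ℕ, 1 ≤ n → lucasSeq s t n ≠ 0) (u v α β : ℂ) (n : ℕ) :
    lucasPow s t u v α β (n + 1) =
      α * lucasPow s t u v (α * u) (β * ((s + d) / 2)) n
        + β * lucasPow s t u v (α * ((s - d) / 2)) (β * v) n := by
  have hF := lucasFact_ne_zero s t hL
  have hb0 : ∀ m, lucasBinom s t m 0 = 1 := by
    intro m
    unfold lucasBinom
    rw [Nat.sub_zero, show lucasFact s t 0 = 1 from rfl, one_mul, div_self (hF m)]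
  have hbn : ∀ m, lucasBinom s t m m = 1 := by
    intro m
    unfold lucasBinom
    rw [Nat.sub_self, show lucasFact s t 0 = 1 from rfl, mul_one, div_self (hF m)]
  have pas : ∀ k m : ℕ, lucasBinom s t (k + m + 2) (k + 1) =
      ((s + d) / 2) ^ (k + 1) * lucasBinom s t (k + m + 1) (k + 1)
        + ((s - d) / 2) ^ (m + 1) * lucasBinom s t (k + m + 1) k :=
    pascal s t d hd hdne hL
  unfold lucasPow
  generalize hφ : (s + d) / 2 = φ at pas ⊢
  generalize hψ : (s - d) / 2 = ψ at pas ⊢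
  have stepA : (∑ k ∈ Finset.range (n + 1 + 1),
        lucasBinom s t (n + 1) k * u ^ ((n + 1 - k).choose 2) * v ^ (k.choose 2)
          * α ^ (n + 1 - k) * β ^ k)
      = (∑ k ∈ Finset.range n,
          ((φ ^ (k + 1) * lucasBinom s t n (k + 1)
              + ψ ^ (n - k) * lucasBinom s t n k)
            * (u ^ ((n - k).choose 2) * v ^ ((k + 1).choose 2)
                * α ^ (n - k) * β ^ (k + 1))))
        + u ^ ((n + 1).choose 2) * α ^ (n + 1)
        + v ^ ((n + 1).choose 2) * β ^ (n + 1) := by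
    rw [Finset.sum_range_succ, Finset.sum_range_succ']
    congr 1
    · congr 1
      · apply Finset.sum_congr rfl
        intro k hk
        have hk' := Finset.mem_range.mp hk
        obtain ⟨m, rfl⟩ : ∃ m, n = k + m + 1 := ⟨n - (k + 1), by omega⟩
        rw [show k + m + 1 + 1 - (k + 1) = m + 1 from by omega,
            show k + m + 1 - k = m + 1 from by omega,
            show k + m + 1 + 1 = k + m + 2 from by omega, pas k m]
        ring
      · simp [hb0]
    · simp [hbn]
  have stepB : α * (∑ k ∈ Finset.range (n + 1),
        lucasBinom s t n k * u ^ ((n - k).choose 2) * v ^ (k.choose 2)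
          * (α * u) ^ (n - k) * (β * φ) ^ k)
      = (∑ k ∈ Finset.range n,
          (φ ^ (k + 1) * lucasBinom s t n (k + 1)
            * (u ^ ((n - k).choose 2) * v ^ ((k + 1).choose 2)
                * α ^ (n - k) * β ^ (k + 1))))
        + u ^ ((n + 1).choose 2) * α ^ (n + 1) := by
    rw [Finset.mul_sum, Finset.sum_range_succ']
    congr 1
    · apply Finset.sum_congr rfl
      intro k hk
      have hk' := Finset.mem_range.mp hk
      obtain ⟨m, rfl⟩ : ∃ m, n = k + m + 1 := ⟨n - (k + 1), by omega⟩
      rw [show k + m + 1 - (k + 1) = m from by omega,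
          show k + m + 1 - k = m + 1 from by omega, choose_two_succ m]
      ring
    · rw [hb0, Nat.sub_zero, choose_two_succ n]
      simp
      ring
  have stepC : β * (∑ k ∈ Finset.range (n + 1),
        lucasBinom s t n k * u ^ ((n - k).choose 2) * v ^ (k.choose 2)
          * (α * ψ) ^ (n - k) * (β * v) ^ k)
      = (∑ k ∈ Finset.range n,
          (ψ ^ (n - k) * lucasBinom s t n k
            * (u ^ ((n - k).choose 2) * v ^ ((k + 1).choose 2)
                * α ^ (n - k) * β ^ (k + 1))))
        + v ^ ((n + 1).choose 2) * β ^ (n + 1) := by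
    rw [Finset.mul_sum, Finset.sum_range_succ]
    congr 1
    · apply Finset.sum_congr rfl
      intro k hk
      rw [choose_two_succ k]
      ring
    · rw [hbn, Nat.sub_self, choose_two_succ n]
      simp
      ring
  rw [stepA, stepB, stepC]
  simp only [add_mul, Finset.sum_add_distrib]
  ring

lemma lucasPow_scale (s t u v α β c : ℂ) (n : ℕ) :
    lucasPow s t u v (α * c) (β * c) n = c ^ n * lucasPow s t u v α β n := by
  unfold lucasPow
  rw [Finset.mul_sum]
  apply Finset.sum_congr rfl
  intro k hk
  have hk' : k ≤ n := Nat.lt_succ_iff.mp (Finset.mem_range.mp hk)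
  rw [mul_pow, mul_pow, show c ^ n = c ^ (n - k) * c ^ k by
    rw [← pow_add, Nat.sub_add_cancel hk']]
  ring

lemma binLucasExp_scale (s t u v α β c x : ℂ) :
    binLucasExp s t u v (α * c) (β * c) x = binLucasExp s t u v α β (c * x) := by
  unfold binLucasExp
  apply tsum_congr
  intro n
  rw [lucasPow_scale, mul_pow]
  ring

/-- Lucas-derivative of the binomial exponential, where `φ = (s+d)/2`, `φ' = (s-d)/2`
with `d` a square root of `s²+4t ≠ 0`. -/
theorem lucasDeriv_binLucasExp (s t : ℂ) (hs : s ≠ 0) (ht : t ≠ 0)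
    (hst : s ^ 2 + 4 * t ≠ 0) (hL : ∀ n : ℕ, 1 ≤ n → lucasSeq s t n ≠ 0)
    (d : ℂ) (hd : d ^ 2 = s ^ 2 + 4 * t) (α β u v : ℂ)
    (h1 : ∀ w : ℂ, Summable fun n : ℕ =>
      ‖lucasPow s t u v α β n * w ^ n / lucasFact s t n‖)
    (h2 : ∀ w : ℂ, Summable fun n : ℕ =>
      ‖lucasPow s t u v (α * u) (β * ((s + d) / 2)) n * w ^ n / lucasFact s t n‖)
    (h3 : ∀ w : ℂ, Summable fun n : ℕ =>
      ‖lucasPow s t u v (α * ((s - d) / 2)) (β * v) n * w ^ n / lucasFact s t n‖) :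
    (∀ x : ℂ, x ≠ 0 →
      lucasDeriv ((s + d) / 2) ((s - d) / 2) (binLucasExp s t u v α β) x =
        α * binLucasExp s t u v (α * u) (β * ((s + d) / 2)) x +
          β * binLucasExp s t u v (α * ((s - d) / 2)) (β * v) x) ∧
    (u = (s + d) / 2 → v = (s - d) / 2 → ∀ x : ℂ, x ≠ 0 →
      lucasDeriv ((s + d) / 2) ((s - d) / 2) (binLucasExp s t u v α β) x =
        α * binLucasExp s t u v α β (((s + d) / 2) * x) +
          β * binLucasExp s t u v α β (((s - d) / 2) * x)) := by
  have hdne : d ≠ 0 := by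
    intro h
    apply hst
    rw [← hd, h]
    ring
  have hF := lucasFact_ne_zero s t hL
  have main : ∀ x : ℂ, x ≠ 0 →
      lucasDeriv ((s + d) / 2) ((s - d) / 2) (binLucasExp s t u v α β) x =
        α * binLucasExp s t u v (α * u) (β * ((s + d) / 2)) x +
          β * binLucasExp s t u v (α * ((s - d) / 2)) (β * v) x := by
    intro x hx
    have hSφ : Summable (fun n : ℕ =>
        lucasPow s t u v α β n * (((s + d) / 2) * x) ^ n / lucasFact s t n) :=
      (h1 _).of_norm
    have hSψ : Summable (fun n : ℕ =>
        lucasPow s t u v α β n * (((s - d) / 2) * x) ^ n / lucasFact s t n) :=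
      (h1 _).of_norm
    have hQ : Summable (fun n : ℕ =>
        lucasPow s t u v (α * u) (β * ((s + d) / 2)) n * x ^ n / lucasFact s t n) :=
      (h2 x).of_norm
    have hR : Summable (fun n : ℕ =>
        lucasPow s t u v (α * ((s - d) / 2)) (β * v) n * x ^ n / lucasFact s t n) :=
      (h3 x).of_norm
    unfold lucasDeriv binLucasExp
    rw [← Summable.tsum_sub hSφ hSψ, ← tsum_div_const]
    have term_eq : ∀ n : ℕ,
        (lucasPow s t u v α β n * (((s + d) / 2) * x) ^ n / lucasFact s t n
          - lucasPow s t u v α β n * (((s - d) / 2) * x) ^ n / lucasFact s t n)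
          / (((s + d) / 2 - (s - d) / 2) * x)
        = (fun n : ℕ => match n with
            | 0 => (0 : ℂ)
            | m + 1 =>
              α * (lucasPow s t u v (α * u) (β * ((s + d) / 2)) m * x ^ m / lucasFact s t m)
                + β * (lucasPow s t u v (α * ((s - d) / 2)) (β * v) m * x ^ m
                    / lucasFact s t m)) n := by
      intro n
      match n with
      | 0 => simp
      | m + 1 =>
        have hb := binet s t d hd (m + 1)
        have hkey := key s t d hd hdne hL u v α β m
        have hFm := hF m
        have hLm := hL (m + 1) (by omega)
        show _ = α * _ + β * _
        rw [show (s + d) / 2 - (s - d) / 2 = d by ring, hkey]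
        rw [show lucasFact s t (m + 1) = lucasFact s t m * lucasSeq s t (m + 1) from rfl]
        rw [mul_pow, mul_pow]
        generalize hφ : (s + d) / 2 = φ at hb ⊢
        generalize hψ : (s - d) / 2 = ψ at hb ⊢
        generalize hA : lucasPow s t u v (α * u) (β * φ) m = A
        generalize hB : lucasPow s t u v (α * ψ) (β * v) m = B
        generalize hLg : lucasSeq s t (m + 1) = L at hLm hb ⊢
        generalize hFg : lucasFact s t m = F at hFm ⊢
        field_simp
        linear_combination (-(α * A + β * B) * x ^ (m + 1)) * hb
    rw [tsum_congr term_eq]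
    rw [Summable.tsum_eq_zero_add]
    · simp only [zero_add]
      rw [Summable.tsum_add (hQ.mul_left α) (hR.mul_left β), tsum_mul_left, tsum_mul_left]
    · apply (summable_nat_add_iff 1).mp
      exact (hQ.mul_left α).add (hR.mul_left β)
  refine ⟨main, ?_⟩
  intro hu hv x hx
  rw [main x hx, ← hu, ← hv]
  rw [binLucasExp_scale s t u v α β u x, binLucasExp_scale s t u v α β v x]
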